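/- For all natural numbers q: Σ_{n=0}^{q} F_n⁶ = binom(q+1,6)_F + binom(q+5,6)_F − 11·(binom(q+2,6)_F + binom(q+4,6)_F) − 64·binom(q+3,6)_F, where binom(n,6)_F denotes the Fibonomial coefficient. -/

import Mathlib

/-- The Fibonomial coefficient `binom(n,k)_F` as a rational number
(`= 0` when `k > n`, since then `F_0 = 0` appears in the numerator). -/
def fibBinom (n k : ℕ) : ℚ :=
  (∏ i ∈ Finset.range k, (Nat.fib (n - i) : ℚ)) /
    (∏ i ∈ Finset.range k, (Nat.fib (i + 1) : ℚ))

lemma fibBinom_shift (n : ℕ) : fibBinom (n+5) 6 =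
    (Nat.fib (n+5) * Nat.fib (n+4) * Nat.fib (n+3) * Nat.fib (n+2) * Nat.fib (n+1) * Nat.fib n : ℚ) / 240 := by
  simp only [fibBinom, Finset.prod_range_succ, Finset.prod_range_zero, one_mul]
  norm_num [show n+5-1 = n+4 from rfl, show n+5-2 = n+3 from rfl, show n+5-3 = n+2 from rfl,
    show n+5-4 = n+1 from rfl, show n+5-5 = n from rfl]

lemma fib_cast (j : ℕ) : (Nat.fib (j+2) : ℚ) = Nat.fib j + Nat.fib (j+1) := by
  rw [Nat.fib_add_two]; push_cast; ring

lemma step (m : ℕ) :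
    (Nat.fib (m+5) : ℚ)^6 =
      (fibBinom (m+6) 6 + fibBinom (m+10) 6
        - 11 * (fibBinom (m+7) 6 + fibBinom (m+9) 6) - 64 * fibBinom (m+8) 6)
      - (fibBinom (m+5) 6 + fibBinom (m+9) 6
        - 11 * (fibBinom (m+6) 6 + fibBinom (m+8) 6) - 64 * fibBinom (m+7) 6) := by
  rw [show m+6 = (m+1)+5 from rfl, show m+7 = (m+2)+5 from rfl, show m+8 = (m+3)+5 from rfl,
    show m+9 = (m+4)+5 from rfl, show m+10 = (m+5)+5 from rfl]
  rw [fibBinom_shift, fibBinom_shift, fibBinom_shift, fibBinom_shift, fibBinom_shift,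
    fibBinom_shift]
  rw [fib_cast (m+8), fib_cast (m+7), fib_cast (m+6), fib_cast (m+5), fib_cast (m+4),
    fib_cast (m+3), fib_cast (m+2), fib_cast (m+1), fib_cast m]
  ring

lemma base4 :
    ∑ n ∈ Finset.range (4 + 1), (Nat.fib n : ℚ) ^ 6 =
      fibBinom (4 + 1) 6 + fibBinom (4 + 5) 6
        - 11 * (fibBinom (4 + 2) 6 + fibBinom (4 + 4) 6) - 64 * fibBinom (4 + 3) 6 := by
  norm_num [fibBinom, Finset.prod_range_succ, Finset.sum_range_succ, Nat.fib]

lemma aux (m : ℕ) :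
    ∑ n ∈ Finset.range (m + 4 + 1), (Nat.fib n : ℚ) ^ 6 =
      fibBinom (m + 4 + 1) 6 + fibBinom (m + 4 + 5) 6
        - 11 * (fibBinom (m + 4 + 2) 6 + fibBinom (m + 4 + 4) 6)
        - 64 * fibBinom (m + 4 + 3) 6 := by
  induction m with
  | zero => exact base4
  | succ k ih =>
    rw [show k+1+4+1 = (k+4+1)+1 from rfl, Finset.sum_range_succ, ih]
    have h1 := step k
    have e1 : k+4+1 = k+5 := rfl
    have e2 : k+1+4+1 = k+6 := rfl
    have e3 : k+1+4+5 = k+10 := rfl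
    have e4 : k+1+4+2 = k+7 := rfl
    have e5 : k+1+4+4 = k+9 := rfl
    have e6 : k+1+4+3 = k+8 := rfl
    have e7 : k+4+5 = k+9 := rfl
    have e8 : k+4+2 = k+6 := rfl
    have e9 : k+4+4 = k+8 := rfl
    have e10 : k+4+3 = k+7 := rfl
    rw [e1, e2, e3, e4, e5, e6, e7, e8, e9, e10]
    linarith [h1]

theorem stmt_17 (q : ℕ) :
    ∑ n ∈ Finset.range (q + 1), (Nat.fib n : ℚ) ^ 6 =
      fibBinom (q + 1) 6 + fibBinom (q + 5) 6
        - 11 * (fibBinom (q + 2) 6 + fibBinom (q + 4) 6) - 64 * fibBinom (q + 3) 6 := by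
  rcases Nat.lt_or_ge q 4 with h | h
  · interval_cases q <;>
      norm_num [fibBinom, Finset.prod_range_succ, Finset.sum_range_succ, Nat.fib]
  · obtain ⟨m, rfl⟩ : ∃ m, q = m + 4 := ⟨q - 4, by omega⟩
    exact aux m
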